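/- arXiv:2201.02658 — 2 statements merged into one kernel-verified Lean document; each statement's English description precedes it below -/
import Mathlib

section
/- (Approximate low rank from bounded successive row differences.) Let H ∈ ℝ^{T×N} be a real matrix, ε > 0, and δ_1,…,δ_{T−1} ≥ 0 be such that |H_{t,i} − H_{t+1,i}| ≤ δ_t for all t = 1,…,T−1 and all i = 1,…,N. Then there exists a matrix Z ∈ ℝ^{T×N} with rank(Z) ≤ ⌊(Σ_{t=1}^{T−1} δ_t)/ε⌋ + 1 such that |H_{t,i} − Z_{t,i}| ≤ ε for all t and i. -/
/-- **Approximate low rank from bounded successive row differences.**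
If the successive rows of `H ∈ ℝ^{T×N}` differ entrywise by at most
`δ t`, then `H` can be approximated entrywise within `ε` by a matrix of
rank at most `⌊(∑ δ t) / ε⌋ + 1`. -/
theorem eps_rank_of_bounded_row_differences
    (T N : ℕ) (H : Matrix (Fin T) (Fin N) ℝ)
    (ε : ℝ) (hε : 0 < ε)
    (δ : ℕ → ℝ) (hδ : ∀ t, 0 ≤ δ t)
    (hrow : ∀ (t : ℕ) (ht : t + 1 < T) (i : Fin N),
        |H ⟨t, Nat.lt_of_succ_lt ht⟩ i - H ⟨t + 1, ht⟩ i| ≤ δ t) :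
    ∃ Z : Matrix (Fin T) (Fin N) ℝ,
      Z.rank ≤ Nat.floor ((∑ t ∈ Finset.range (T - 1), δ t) / ε) + 1 ∧
      ∀ (t : Fin T) (i : Fin N), |H t i - Z t i| ≤ ε := by
  rcases Nat.eq_zero_or_pos T with hT | hT
  · subst hT
    refine ⟨0, ?_, fun t => t.elim0⟩
    exact le_trans (Matrix.rank_le_card_height _) (by simp)
  set S : ℕ → ℝ := fun t => ∑ s ∈ Finset.range t, δ s with hS
  have hSmono : Monotone S := fun a b hab =>
    Finset.sum_le_sum_of_subset_of_nonneg (Finset.range_subset_range.2 hab) (fun i _ _ => hδ i)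
  have hS0 : ∀ t, 0 ≤ S t := fun t => Finset.sum_nonneg fun i _ => hδ i
  -- telescoping bound
  have tele : ∀ (a b : ℕ) (hab : a ≤ b) (hb : b < T) (i : Fin N),
      |H ⟨a, lt_of_le_of_lt hab hb⟩ i - H ⟨b, hb⟩ i| ≤ S b - S a := by
    intro a b hab
    induction b, hab using Nat.le_induction with
    | base => intro hb i; simp
    | succ b hab ih =>
      intro hb i
      have hb' : b < T := Nat.lt_of_succ_lt hb
      calc |H ⟨a, _⟩ i - H ⟨b+1, hb⟩ i|
          ≤ |H ⟨a, lt_of_le_of_lt hab hb'⟩ i - H ⟨b, hb'⟩ i|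
            + |H ⟨b, hb'⟩ i - H ⟨b+1, hb⟩ i| := abs_sub_le _ _ _
        _ ≤ (S b - S a) + δ b := add_le_add (ih hb' i) (hrow b hb i)
        _ = S (b+1) - S a := by simp [hS, Finset.sum_range_succ]; ring
  set M := Nat.floor (S (T-1) / ε) with hM
  have hgle : ∀ t : Fin T, Nat.floor (S t / ε) ≤ M := by
    intro t
    apply Nat.floor_le_floor
    exact (div_le_div_iff_of_pos_right hε).2 (hSmono (by omega : (t : ℕ) ≤ T - 1))
  set g : Fin T → Fin (M+1) := fun t => ⟨Nat.floor (S t / ε), Nat.lt_succ_of_le (hgle t)⟩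
    with hg
  set rep : Fin (M+1) → Fin T := fun k =>
    if h : ∃ t, g t = k then h.choose else ⟨0, hT⟩ with hrep
  have hrepg : ∀ t : Fin T, g (rep (g t)) = g t := by
    intro t
    have h : ∃ t', g t' = g t := ⟨t, rfl⟩
    simp only [hrep, dif_pos h]
    exact h.choose_spec
  -- the two matrices
  set W : Matrix (Fin (M+1)) (Fin N) ℝ := Matrix.of fun k i => H (rep k) i with hW
  set P : Matrix (Fin T) (Fin (M+1)) ℝ :=
    Matrix.of fun t k => if k = g t then (1:ℝ) else 0 with hP
  refine ⟨P * W, ?_, ?_⟩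
  · calc (P * W).rank ≤ W.rank := Matrix.rank_mul_le_right P W
      _ ≤ Fintype.card (Fin (M+1)) := Matrix.rank_le_card_height W
      _ = M + 1 := Fintype.card_fin _
  · intro t i
    have hmul : (P * W) t i = H (rep (g t)) i := by
      simp [Matrix.mul_apply, hP, hW]
    rw [hmul]
    set t' := rep (g t) with ht'
    have hfloor : Nat.floor (S t' / ε) = Nat.floor (S t / ε) := by
      have := hrepg t
      simpa [hg, Fin.ext_iff] using this
    -- |S t - S t'| < ε
    have key : ∀ a b : Fin T, Nat.floor (S a / ε) = Nat.floor (S b / ε) →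
        (a : ℕ) ≤ (b : ℕ) → S b - S a ≤ ε := by
      intro a b hfl hab
      have h1 : (Nat.floor (S a / ε) : ℝ) ≤ S a / ε :=
        Nat.floor_le (div_nonneg (hS0 a) hε.le)
      have h2 : S b / ε < Nat.floor (S b / ε) + 1 := Nat.lt_floor_add_one _
      rw [← hfl] at h2
      have h3 : (S b - S a) / ε < 1 := by rw [sub_div]; linarith
      linarith [(div_lt_one hε).1 h3]
    rcases le_total (t' : ℕ) (t : ℕ) with hle | hle
    · have h := tele t' t hle t.isLt i
      simp only [Fin.eta] at h
      have h2 := key t' t hfloor hle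
      calc |H t i - H t' i| = |H t' i - H t i| := abs_sub_comm _ _
        _ ≤ S t - S t' := h
        _ ≤ ε := h2
    · have h := tele t t' hle t'.isLt i
      simp only [Fin.eta] at h
      have h2 := key t t' hfloor.symm hle
      calc |H t i - H t' i| ≤ S t' - S t := h
        _ ≤ ε := h2
end

section
/- (Quantitative reward gap for the harder-working client.) Let E be a real inner product space, μ > 0, and g : E → ℝ a μ-strongly convex function with global minimizer θ* ∈ E. Then for every ρ ∈ [0, 1]: 2·( g( (ρ/(1+ρ))·θ* ) − g( (1/(1+ρ))·θ* ) ) ≥ μ·((1−ρ)/(1+ρ))²·‖θ*‖². -/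
/-- From strong convexity and minimality, the quadratic growth bound at the minimizer. -/
theorem quad_growth_of_strongly_convex
    {E : Type*} [NormedAddCommGroup E] [InnerProductSpace ℝ E]
    (μ : ℝ) (g : E → ℝ)
    (hsc : StrongConvexOn Set.univ μ g)
    (θstar : E) (hmin : ∀ θ : E, g θstar ≤ g θ) (x : E) :
    g θstar + μ / 2 * ‖x - θstar‖ ^ 2 ≤ g x := by
  have key : ∀ t : ℝ, t ∈ Set.Ioo (0:ℝ) 1 →
      μ / 2 * ((1 - t) * ‖x - θstar‖ ^ 2) ≤ g x - g θstar := by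
    intro t ht
    have h1 := hsc.2 (Set.mem_univ x) (Set.mem_univ θstar)
      (le_of_lt ht.1) (by linarith [ht.2] : (0:ℝ) ≤ 1 - t) (by ring)
    have h2 := hmin (t • x + (1 - t) • θstar)
    have ht0 : 0 < t := ht.1
    simp only [smul_eq_mul] at h1
    have : t * (g θstar) ≤ t * g x - t * (1 - t) * (μ / 2 * ‖x - θstar‖ ^ 2) := by
      nlinarith [h1, h2]
    have := (mul_le_mul_iff_right₀ ht0).mp (by nlinarith : t * (μ / 2 * ((1 - t) * ‖x - θstar‖ ^ 2)) ≤ t * (g x - g θstar))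
    linarith
  have hlim : Filter.Tendsto (fun t : ℝ => μ / 2 * ((1 - t) * ‖x - θstar‖ ^ 2))
      (nhdsWithin 0 (Set.Ioo (0:ℝ) 1)) (nhds (μ / 2 * ((1 - 0) * ‖x - θstar‖ ^ 2))) := by
    have hc : Continuous fun t : ℝ => μ / 2 * ((1 - t) * ‖x - θstar‖ ^ 2) := by continuity
    exact (hc.tendsto 0).mono_left nhdsWithin_le_nhds
  have hne : (nhdsWithin (0:ℝ) (Set.Ioo (0:ℝ) 1)).NeBot := by
    apply mem_closure_iff_nhdsWithin_neBot.mp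
    have : (0:ℝ) ∈ closure (Set.Ioo (0:ℝ) 1) := by
      rw [closure_Ioo (by norm_num : (0:ℝ) ≠ 1)]
      simp
    exact this
  have := le_of_tendsto hlim (eventually_nhdsWithin_of_forall key)
  norm_num at this
  linarith

/-- **Quantitative reward gap for the harder-working client.**
`g` is `μ`-strongly convex (i.e. `g - (μ/2)‖·‖²` is convex) with global
minimizer `θ*`.  For every `ρ ∈ [0,1]`,
`2 (g((ρ/(1+ρ)) θ*) - g((1/(1+ρ)) θ*)) ≥ μ ((1-ρ)/(1+ρ))² ‖θ*‖²`. -/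
theorem reward_gap_of_strongly_convex
    {E : Type*} [NormedAddCommGroup E] [InnerProductSpace ℝ E]
    (μ : ℝ) (hμ : 0 < μ) (g : E → ℝ)
    (hsc : ConvexOn ℝ Set.univ (fun x => g x - μ / 2 * ‖x‖ ^ 2))
    (θstar : E) (hmin : ∀ θ : E, g θstar ≤ g θ)
    (ρ : ℝ) (hρ₀ : 0 ≤ ρ) (hρ₁ : ρ ≤ 1) :
    2 * (g ((ρ / (1 + ρ)) • θstar) - g ((1 / (1 + ρ)) • θstar)) ≥
      μ * ((1 - ρ) / (1 + ρ)) ^ 2 * ‖θstar‖ ^ 2 := by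
  have hsc' : StrongConvexOn Set.univ μ g := strongConvexOn_iff_convex.mpr hsc
  have h1ρ : (0:ℝ) < 1 + ρ := by linarith
  set a : ℝ := ρ / (1 + ρ) with ha
  set b : ℝ := 1 / (1 + ρ) with hb
  set N : ℝ := ‖θstar‖ ^ 2 with hN
  have hNnn : 0 ≤ N := by positivity
  -- key vector identity: ρ • (a • θstar) + (1 - ρ) • θstar = b • θstar
  have hvec : ρ • (a • θstar) + (1 - ρ) • θstar = b • θstar := by
    rw [smul_smul, ← add_smul]
    congr 1
    rw [ha, hb]
    field_simp
    ring
  -- norm identity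
  have hnorm : ‖a • θstar - θstar‖ ^ 2 = b ^ 2 * N := by
    have : a • θstar - θstar = (a - 1) • θstar := by rw [sub_smul, one_smul]
    rw [this, norm_smul]
    have : a - 1 = -b := by rw [ha, hb]; field_simp; ring
    rw [this]
    simp [hN, mul_pow]
  -- upper bound on g (b • θstar)
  have hB := hsc'.2 (Set.mem_univ (a • θstar)) (Set.mem_univ θstar)
    hρ₀ (by linarith : (0:ℝ) ≤ 1 - ρ) (by ring)
  rw [hvec] at hB
  simp only [smul_eq_mul] at hB
  rw [hnorm] at hB
  -- lower bound on g (a • θstar)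
  have hA := quad_growth_of_strongly_convex μ g hsc' θstar hmin (a • θstar)
  rw [hnorm] at hA
  -- final algebra
  have hb2 : b ^ 2 * (1 + ρ) ^ 2 = 1 := by
    rw [hb]; field_simp
  have hgoal : ((1 - ρ) / (1 + ρ)) ^ 2 = (1 - ρ) ^ 2 * b ^ 2 := by
    rw [hb]; field_simp
  rw [hgoal]
  have hbN : 0 ≤ b ^ 2 * N := by positivity
  have h3 : (1 - ρ) * (g θstar + μ / 2 * (b ^ 2 * N)) ≤ (1 - ρ) * g (a • θstar) :=
    mul_le_mul_of_nonneg_left hA (by linarith)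
  have h4 : 0 ≤ ρ * ((1 - ρ) * (μ / 2 * (b ^ 2 * N))) := by
    apply mul_nonneg hρ₀
    apply mul_nonneg (by linarith)
    positivity
  nlinarith [hB, h3, h4]
end
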